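/- In any dynamic matching market in which all arrival times are nonnegative, a matching chronology that is stable subject to tenure exists. -/

import Mathlib

/-- A dynamic matching market: a marriage market (injective `Option ℕ`-valued
rankings encode preference lists of order type at most ω, `none` = unacceptable)
together with integer arrival and departure times for each man; women are always
present. -/
structure DynMarket (M W : Type*) where
  mPref : M → W → Option ℕ
  wPref : W → M → Option ℕ
  mPref_inj : ∀ m w w' r, mPref m w = some r → mPref m w' = some r → w = w'
  wPref_inj : ∀ w m m' r, wPref w m = some r → wPref w m' = some r → m = m'
  arr : M → ℤ
  dep : M → ℤ
  arr_lt_dep : ∀ m, arr m < dep m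

namespace DynMarket

variable {M W : Type*}

/-- Man `m` is on the market at time `t` if `arr m ≤ t < dep m`. -/
def OnMarket (E : DynMarket M W) (m : M) (t : ℤ) : Prop :=
  E.arr m ≤ t ∧ t < E.dep m

/-- A matching chronology: at each time, each man is matched to at most one woman
and each woman to at most one man, and only men currently on the market are matched. -/
def IsChronology (E : DynMarket M W) (μ : ℤ → M → Option W) : Prop :=
  (∀ t m m' w, μ t m = some w → μ t m' = some w → m = m') ∧
  (∀ t m w, μ t m = some w → OnMarket E m t)

/-- Man `m` strictly prefers woman `w` to the outcome `o`. -/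
def ManPrefers (E : DynMarket M W) (m : M) (w : W) (o : Option W) : Prop :=
  ∃ r, E.mPref m w = some r ∧
    (o = none ∨ ∃ w' r', o = some w' ∧ E.mPref m w' = some r' ∧ r < r')

/-- Man `m` weakly prefers outcome `o` to outcome `o'`. -/
def ManWeaklyPrefers (E : DynMarket M W) (m : M) (o o' : Option W) : Prop :=
  o = o' ∨ ∃ w, o = some w ∧ ManPrefers E m w o'

/-- Woman `w` strictly prefers man `m` to her assignment under the one-period
matching `ν`. -/
def WomanPrefers (E : DynMarket M W) (w : W) (m : M) (ν : M → Option W) : Prop :=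
  ∃ r, E.wPref w m = some r ∧
    ((∀ m', ν m' ≠ some w) ∨ ∃ m' r', ν m' = some w ∧ E.wPref w m' = some r' ∧ r < r')

/-- The chronology `μ` is stable subject to tenure: it is a chronology in which no
one is ever matched to an unacceptable partner; every man present at consecutive
times weakly prefers his later match to his earlier one (tenure); and at no time is
there a man-woman pair each strictly preferring the other to their current
assignment, except that a woman whose current partner is also her previous-period
partner cannot participate in a block. -/
def StableSubjectToTenure (E : DynMarket M W) (μ : ℤ → M → Option W) : Prop :=
  IsChronology E μ ∧
  (∀ t m w, μ t m = some w → E.mPref m w ≠ none ∧ E.wPref w m ≠ none) ∧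
  (∀ t m, OnMarket E m t → OnMarket E m (t + 1) →
    ManWeaklyPrefers E m (μ (t + 1) m) (μ t m)) ∧
  (∀ t m w, OnMarket E m t →
    ¬ (ManPrefers E m w (μ t m) ∧ WomanPrefers E w m (μ t) ∧
        ¬ ∃ m', μ t m' = some w ∧ μ (t - 1) m' = some w))

/-- Finite presence: at every time `t`, only finitely many men are on the market at
both `t` and `t + 1`. -/
def FinitePresence (E : DynMarket M W) : Prop :=
  ∀ t : ℤ, {m | OnMarket E m t ∧ OnMarket E m (t + 1)}.Finite

end DynMarket

open Classical

lemma enat_sInf_mem {S : Set ℕ∞} (h : S.Nonempty) : sInf S ∈ S := by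
  by_cases htop : ∃ n : ℕ, (n : ℕ∞) ∈ S
  · obtain ⟨n, hn⟩ := htop
    have hT : {k : ℕ | (k : ℕ∞) ∈ S}.Nonempty := ⟨n, hn⟩
    have hmem := Nat.sInf_mem hT
    have heq : sInf S = ((sInf {k : ℕ | (k : ℕ∞) ∈ S} : ℕ) : ℕ∞) := by
      refine le_antisymm (sInf_le hmem) (le_sInf ?_)
      intro x hx
      cases x with
      | top => exact le_top
      | coe k => exact_mod_cast Nat.sInf_le (show k ∈ {k : ℕ | (k : ℕ∞) ∈ S} from hx)
    rw [heq]; exact hmem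
  · obtain ⟨x, hx⟩ := h
    have hxt : x = ⊤ := by
      cases x with
      | top => rfl
      | coe k => exact absurd ⟨k, hx⟩ htop
    have : sInf S = ⊤ := by
      refine le_antisymm le_top (le_sInf ?_)
      intro y hy
      cases y with
      | top => exact le_rfl
      | coe k => exact absurd ⟨k, hy⟩ htop
    rw [this, ← hxt]; exact hx

section Static

variable {M W : Type*} (mp : M → W → Option ℕ) (wp : W → M → Option ℕ) (P : M → Prop)

/-- Women's options `b` ↦ set of achievable ranks for man `m`. -/
def AmSet (b : W → ℕ∞) (m : M) : Set ℕ∞ :=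
  {x | ∃ w r s, mp m w = some r ∧ wp w m = some s ∧ (s : ℕ∞) ≤ b w ∧ x = (r : ℕ∞)}

/-- Men's options `a` ↦ set of achievable ranks for woman `w`. -/
def BwSet (a : M → ℕ∞) (w : W) : Set ℕ∞ :=
  {x | ∃ m r s, P m ∧ mp m w = some r ∧ wp w m = some s ∧ (r : ℕ∞) ≤ a m ∧ x = (s : ℕ∞)}

noncomputable def Fmap : ((M → ℕ∞) × (W → ℕ∞)ᵒᵈ) →o ((M → ℕ∞) × (W → ℕ∞)ᵒᵈ) where
  toFun p := (fun m => sInf (AmSet mp wp (OrderDual.ofDual p.2) m),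
              OrderDual.toDual fun w => sInf (BwSet mp wp P p.1 w))
  monotone' := by
    rintro ⟨a₁, b₁⟩ ⟨a₂, b₂⟩ ⟨h1, h2⟩
    constructor
    · intro m
      apply sInf_le_sInf
      rintro x ⟨w, r, s, h₁, h₂', h₃, h₄⟩
      exact ⟨w, r, s, h₁, h₂', le_trans h₃ (h2 w), h₄⟩
    · intro w
      apply sInf_le_sInf
      rintro x ⟨m, r, s, hP, h₁, h₂', h₃, h₄⟩
      exact ⟨m, r, s, hP, h₁, h₂', le_trans h₃ (h1 m), h₄⟩

noncomputable def fpA : M → ℕ∞ := (OrderHom.lfp (Fmap mp wp P)).1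
noncomputable def fpB : W → ℕ∞ := OrderDual.ofDual (OrderHom.lfp (Fmap mp wp P)).2

lemma fpA_eq (m : M) : fpA mp wp P m = sInf (AmSet mp wp (fpB mp wp P) m) := by
  have h := OrderHom.map_lfp (Fmap mp wp P)
  have := congrArg Prod.fst h
  exact (congrFun this m).symm

lemma fpB_eq (w : W) : fpB mp wp P w = sInf (BwSet mp wp P (fpA mp wp P) w) := by
  have h := OrderHom.map_lfp (Fmap mp wp P)
  have := congrArg Prod.snd h
  exact (congrFun (congrArg OrderDual.ofDual this) w).symm

noncomputable def nuOf : M → Option W := fun m =>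
  if h : ∃ w, P m ∧ ∃ r s, mp m w = some r ∧ wp w m = some s ∧
      (s : ℕ∞) ≤ fpB mp wp P w ∧ fpA mp wp P m = (r : ℕ∞)
  then some h.choose else none

lemma nuOf_spec {m : M} {w : W} (h : nuOf mp wp P m = some w) :
    P m ∧ ∃ r s, mp m w = some r ∧ wp w m = some s ∧
      (s : ℕ∞) ≤ fpB mp wp P w ∧ fpA mp wp P m = (r : ℕ∞) := by
  unfold nuOf at h
  split at h
  · next hex =>
    obtain rfl : hex.choose = w := by injection h
    exact hex.choose_spec
  · exact absurd h (by simp)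

lemma nuOf_of_cond (hmp : ∀ m w w' r, mp m w = some r → mp m w' = some r → w = w')
    {m : M} {w : W} (hP : P m)
    (h : ∃ r s, mp m w = some r ∧ wp w m = some s ∧
      (s : ℕ∞) ≤ fpB mp wp P w ∧ fpA mp wp P m = (r : ℕ∞)) :
    nuOf mp wp P m = some w := by
  have hex : ∃ w, P m ∧ ∃ r s, mp m w = some r ∧ wp w m = some s ∧
      (s : ℕ∞) ≤ fpB mp wp P w ∧ fpA mp wp P m = (r : ℕ∞) := ⟨w, hP, h⟩
  unfold nuOf
  rw [dif_pos hex]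
  obtain ⟨_, r', s', h1', h2', h3', h4'⟩ := hex.choose_spec
  obtain ⟨r, s, h1, h2, h3, h4⟩ := h
  have : r' = r := by
    have := h4'.symm.trans h4
    exact_mod_cast this
  subst this
  exact congrArg some (hmp m _ w r' h1' h1)

end Static

/-- Existence of a stable matching for an arbitrary marriage market with injective
`Option ℕ`-valued rankings, where only men satisfying `P` participate. -/
theorem static_stable {M W : Type*} (mp : M → W → Option ℕ) (wp : W → M → Option ℕ)
    (hmp : ∀ m w w' r, mp m w = some r → mp m w' = some r → w = w')
    (hwp : ∀ w m m' r, wp w m = some r → wp w m' = some r → m = m')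
    (P : M → Prop) :
    ∃ ν : M → Option W,
      (∀ m w, ν m = some w → P m) ∧
      (∀ m m' w, ν m = some w → ν m' = some w → m = m') ∧
      (∀ m w, ν m = some w → mp m w ≠ none ∧ wp w m ≠ none) ∧
      (∀ m w, P m →
        ¬ ((∃ r, mp m w = some r ∧
              (ν m = none ∨ ∃ w' r', ν m = some w' ∧ mp m w' = some r' ∧ r < r')) ∧
           (∃ r, wp w m = some r ∧
              ((∀ m', ν m' ≠ some w) ∨
                ∃ m' r', ν m' = some w ∧ wp w m' = some r' ∧ r < r')))) := by
  set a := fpA mp wp P with ha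
  set b := fpB mp wp P with hb
  set ν := nuOf mp wp P with hν
  -- C1: if ν m = some w then b w equals w's rank of m
  have C1 : ∀ m w s, ν m = some w → wp w m = some s → b w = (s : ℕ∞) := by
    intro m w s hm hs
    obtain ⟨hP, r, s', h1, h2, h3, h4⟩ := nuOf_spec mp wp P hm
    have hse : s = s' := by rw [hs] at h2; exact Option.some.inj h2
    subst hse
    have hmem : (s : ℕ∞) ∈ BwSet mp wp P a w := ⟨m, r, s, hP, h1, h2, le_of_eq h4.symm, rfl⟩
    have hle : b w ≤ (s : ℕ∞) := by rw [hb, fpB_eq]; exact sInf_le hmem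
    exact le_antisymm hle h3
  have hinj : ∀ m m' w, ν m = some w → ν m' = some w → m = m' := by
    intro m m' w hm hm'
    obtain ⟨_, r, s, h1, h2, h3, h4⟩ := nuOf_spec mp wp P hm
    obtain ⟨_, r', s', h1', h2', h3', h4'⟩ := nuOf_spec mp wp P hm'
    have e1 := C1 m w s hm h2
    have e2 := C1 m' w s' hm' h2'
    have : s = s' := by exact_mod_cast e1.symm.trans e2
    subst this
    exact hwp w m m' s h2 h2'
  refine ⟨ν, fun m w h => (nuOf_spec mp wp P h).1, hinj, ?_, ?_⟩
  · intro m w h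
    obtain ⟨_, r, s, h1, h2, _, _⟩ := nuOf_spec mp wp P h
    exact ⟨by rw [h1]; simp, by rw [h2]; simp⟩
  · rintro m w hP ⟨⟨r, hr, hro⟩, ⟨s, hs, hso⟩⟩
    -- Step 1: r < a m
    have hram : (r : ℕ∞) < a m := by
      rcases hro with hnone | ⟨w', r', hw', hr', hlt⟩
      · -- ν m = none and P m: Am set must be empty, a m = ⊤
        by_contra hcon
        push_neg at hcon
        -- a m ≤ r < ⊤, so AmSet nonempty would... show AmSet nonempty → ν m ≠ none
        have hne : (AmSet mp wp b m).Nonempty := by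
          by_contra hemp
          rw [Set.not_nonempty_iff_eq_empty] at hemp
          have : a m = ⊤ := by rw [ha, fpA_eq, ← hb, hemp, sInf_empty]
          rw [this] at hcon
          simp at hcon
        have hmem : a m ∈ AmSet mp wp b m := by
          rw [ha, fpA_eq, ← hb]; exact enat_sInf_mem (by rw [hb] at hne ⊢; exact hne)
        obtain ⟨w₀, r₀, s₀, g1, g2, g3, g4⟩ := hmem
        have := nuOf_of_cond mp wp P hmp hP ⟨r₀, s₀, g1, g2, g3, g4⟩
        rw [← hν, hnone] at this
        exact absurd this (by simp)
      · obtain ⟨_, r'', s'', k1, k2, k3, k4⟩ := nuOf_spec mp wp P hw'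
        obtain rfl : r'' = r' := by rw [k1] at hr'; injection hr'
        rw [ha, k4]
        exact_mod_cast hlt
    -- Step 2: r ∉ AmSet, so b w < s
    have hbw : b w < (s : ℕ∞) := by
      by_contra hcon
      push_neg at hcon
      have hmem : (r : ℕ∞) ∈ AmSet mp wp b m := ⟨w, r, s, hr, hs, hcon, rfl⟩
      have : a m ≤ (r : ℕ∞) := by rw [ha, fpA_eq, ← hb]; exact sInf_le hmem
      exact absurd (lt_of_le_of_lt this hram) (lt_irrefl _)
    -- Step 3: b w attained
    have hne : (BwSet mp wp P a w).Nonempty := by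
      by_contra hemp
      rw [Set.not_nonempty_iff_eq_empty] at hemp
      have : b w = ⊤ := by rw [hb, fpB_eq, ← ha, hemp, sInf_empty]
      rw [this] at hbw
      exact absurd hbw (by simp)
    have hmem : b w ∈ BwSet mp wp P a w := by
      rw [hb, fpB_eq, ← ha]; exact enat_sInf_mem (by rwa [ha])
    obtain ⟨m₀, r₀, s₀, hP₀, g1, g2, g3, g4⟩ := hmem
    -- Step 4: a m₀ = r₀ so ν m₀ = some w
    have ham₀ : a m₀ = (r₀ : ℕ∞) := by
      have hmem' : (r₀ : ℕ∞) ∈ AmSet mp wp b m₀ := ⟨w, r₀, s₀, g1, g2, le_of_eq g4.symm, rfl⟩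
      have : a m₀ ≤ (r₀ : ℕ∞) := by rw [ha, fpA_eq, ← hb]; exact sInf_le hmem'
      exact le_antisymm this g3
    have hν₀ : ν m₀ = some w :=
      nuOf_of_cond mp wp P hmp hP₀ ⟨r₀, s₀, g1, g2, le_of_eq g4.symm, ham₀⟩
    -- Step 5: contradiction with WPre
    rcases hso with hun | ⟨m', r', hm', hr', hlt⟩
    · exact hun m₀ hν₀
    · obtain rfl : m' = m₀ := hinj m' m₀ w hm' hν₀
      obtain rfl : s₀ = r' := by rw [g2] at hr'; injection hr'
      have : (s₀ : ℕ∞) < (s : ℕ∞) := g4 ▸ hbw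
      have h1 : s₀ < s := by exact_mod_cast this
      omega

namespace DynMarket

variable {M W : Type*}

/-- Women's preferences with the `ν`-partner promoted to the top (and all other
ranks shifted up by one). -/
noncomputable def wmod (E : DynMarket M W) (ν : M → Option W) (w : W) (m : M) : Option ℕ :=
  if ν m = some w ∧ (∀ m', ν m' = some w → m' = m) then some 0
  else (E.wPref w m).map (· + 1)

lemma wmod_inj (E : DynMarket M W) (ν : M → Option W) :
    ∀ w m m' r, wmod E ν w m = some r → wmod E ν w m' = some r → m = m' := by
  intro w m m' r h1 h2
  unfold wmod at h1 h2
  by_cases hc : ν m = some w ∧ ∀ m'', ν m'' = some w → m'' = m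
  · rw [if_pos hc] at h1
    by_cases hc' : ν m' = some w ∧ ∀ m'', ν m'' = some w → m'' = m'
    · exact (hc.2 m' hc'.1).symm
    · rw [if_neg hc'] at h2
      obtain ⟨a, ha, hak⟩ := Option.map_eq_some_iff.mp h2
      have hak' : a + 1 = r := hak
      have h0 : (0 : ℕ) = r := Option.some.inj h1
      omega
  · rw [if_neg hc] at h1
    by_cases hc' : ν m' = some w ∧ ∀ m'', ν m'' = some w → m'' = m'
    · rw [if_pos hc'] at h2
      obtain ⟨a, ha, hak⟩ := Option.map_eq_some_iff.mp h1
      have hak' : a + 1 = r := hak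
      have h0 : (0 : ℕ) = r := Option.some.inj h2
      omega
    · rw [if_neg hc'] at h2
      obtain ⟨a, ha, hak⟩ := Option.map_eq_some_iff.mp h1
      obtain ⟨a', ha', hak'⟩ := Option.map_eq_some_iff.mp h2
      have e1 : a + 1 = r := hak
      have e2 : a' + 1 = r := hak'
      obtain rfl : a = a' := by omega
      exact E.wPref_inj w m m' a ha ha'

/-- One step of the dynamic construction: a stable matching for the market of men
present at time `t`, with women's preferences modified by the previous matching. -/
noncomputable def chainStep (E : DynMarket M W) (prev : M → Option W) (t : ℤ) :
    M → Option W :=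
  (static_stable E.mPref (wmod E prev) E.mPref_inj (wmod_inj E prev)
    (fun m => OnMarket E m t)).choose

lemma chainStep_spec (E : DynMarket M W) (prev : M → Option W) (t : ℤ) :
    (∀ m w, chainStep E prev t m = some w → OnMarket E m t) ∧
    (∀ m m' w, chainStep E prev t m = some w → chainStep E prev t m' = some w → m = m') ∧
    (∀ m w, chainStep E prev t m = some w →
      E.mPref m w ≠ none ∧ wmod E prev w m ≠ none) ∧
    (∀ m w, OnMarket E m t →
      ¬ ((∃ r, E.mPref m w = some r ∧
            (chainStep E prev t m = none ∨
              ∃ w' r', chainStep E prev t m = some w' ∧ E.mPref m w' = some r' ∧ r < r')) ∧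
         (∃ r, wmod E prev w m = some r ∧
            ((∀ m', chainStep E prev t m' ≠ some w) ∨
              ∃ m' r', chainStep E prev t m' = some w ∧ wmod E prev w m' = some r' ∧ r < r')))) := by
  unfold chainStep
  exact (static_stable E.mPref (wmod E prev) E.mPref_inj (wmod_inj E prev)
    (fun m => OnMarket E m t)).choose_spec

noncomputable def chain (E : DynMarket M W) : ℕ → (M → Option W)
  | 0 => chainStep E (fun _ => none) ((0 : ℕ) : ℤ)
  | (n+1) => chainStep E (chain E n) ((n+1 : ℕ) : ℤ)

noncomputable def prevFn (E : DynMarket M W) : ℕ → (M → Option W)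
  | 0 => fun _ => none
  | (n+1) => chain E n

lemma chain_eq (E : DynMarket M W) (n : ℕ) :
    chain E n = chainStep E (prevFn E n) ((n : ℕ) : ℤ) := by
  cases n <;> rfl

lemma chain_spec (E : DynMarket M W) (n : ℕ) :
    (∀ m w, chain E n m = some w → OnMarket E m ((n : ℕ) : ℤ)) ∧
    (∀ m m' w, chain E n m = some w → chain E n m' = some w → m = m') ∧
    (∀ m w, chain E n m = some w →
      E.mPref m w ≠ none ∧ wmod E (prevFn E n) w m ≠ none) ∧
    (∀ m w, OnMarket E m ((n : ℕ) : ℤ) →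
      ¬ ((∃ r, E.mPref m w = some r ∧
            (chain E n m = none ∨
              ∃ w' r', chain E n m = some w' ∧ E.mPref m w' = some r' ∧ r < r')) ∧
         (∃ r, wmod E (prevFn E n) w m = some r ∧
            ((∀ m', chain E n m' ≠ some w) ∨
              ∃ m' r', chain E n m' = some w ∧ wmod E (prevFn E n) w m' = some r' ∧ r < r')))) := by
  rw [chain_eq]
  exact chainStep_spec E (prevFn E n) ((n : ℕ) : ℤ)

/-- Women are never matched to unacceptable men along the chain. -/
lemma chain_wacc (E : DynMarket M W) :
    ∀ n m w, chain E n m = some w → E.wPref w m ≠ none := by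
  intro n
  induction n with
  | zero =>
    intro m w h
    have hne := ((chain_spec E 0).2.2.1 m w h).2
    unfold wmod at hne
    split at hne
    · next hc =>
      have := hc.1
      simp [prevFn] at this
    · intro hnone
      rw [hnone] at hne
      exact hne rfl
  | succ k ih =>
    intro m w h
    have hne := ((chain_spec E (k+1)).2.2.1 m w h).2
    unfold wmod at hne
    split at hne
    · next hc => exact ih m w hc.1
    · intro hnone
      rw [hnone] at hne
      exact hne rfl

end DynMarket


open DynMarket in
/-- Pereyra: in any dynamic matching market in which all arrival times are
nonnegative, a matching chronology stable subject to tenure exists. -/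
theorem dynamic_stable_exists_nonneg_arrivals {M W : Type*} (E : DynMarket M W)
    (harr : ∀ m, 0 ≤ E.arr m) :
    ∃ μ : ℤ → M → Option W, StableSubjectToTenure E μ := by
  classical
  set μ : ℤ → M → Option W := fun t => if 0 ≤ t then chain E t.toNat else fun _ => none
    with hμ
  have hμ_pos : ∀ t : ℤ, 0 ≤ t → μ t = chain E t.toNat := by
    intro t ht; simp [hμ, ht]
  have hμ_neg : ∀ t : ℤ, ¬ 0 ≤ t → μ t = fun _ => none := by
    intro t ht; simp [hμ, ht]
  have hμ_succ : ∀ t : ℤ, 0 ≤ t → μ (t + 1) = chain E (t.toNat + 1) := by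
    intro t ht
    have h2 : (t+1).toNat = t.toNat + 1 := by omega
    rw [hμ_pos (t+1) (by omega), h2]
  have hμ_prev : ∀ t : ℤ, 0 ≤ t → μ (t - 1) = prevFn E t.toNat := by
    intro t ht
    rcases eq_or_lt_of_le ht with h0 | h1
    · rw [← h0]
      have : ¬ (0 : ℤ) ≤ 0 - 1 := by omega
      rw [hμ_neg _ this]
      rfl
    · rw [hμ_pos (t-1) (by omega)]
      have h2 : t.toNat = (t-1).toNat + 1 := by omega
      rw [h2]
      rfl
  have hcast : ∀ t : ℤ, 0 ≤ t → ((t.toNat : ℕ) : ℤ) = t := by intro t ht; omega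
  have hcast1 : ∀ t : ℤ, 0 ≤ t → ((t.toNat + 1 : ℕ) : ℤ) = t + 1 := by
    intro t ht; push_cast; omega
  refine ⟨μ, ⟨?_, ?_⟩, ?_, ?_, ?_⟩
  -- injectivity
  · intro t m m' w h h'
    by_cases ht : 0 ≤ t
    · rw [hμ_pos t ht] at h h'
      exact (chain_spec E t.toNat).2.1 m m' w h h'
    · rw [hμ_neg t ht] at h
      simp at h
  -- only present men matched
  · intro t m w h
    by_cases ht : 0 ≤ t
    · rw [hμ_pos t ht] at h
      have := (chain_spec E t.toNat).1 m w h
      rwa [hcast t ht] at this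
    · rw [hμ_neg t ht] at h
      simp at h
  -- acceptability
  · intro t m w h
    by_cases ht : 0 ≤ t
    · rw [hμ_pos t ht] at h
      exact ⟨((chain_spec E t.toNat).2.2.1 m w h).1, chain_wacc E t.toNat m w h⟩
    · rw [hμ_neg t ht] at h
      simp at h
  -- tenure
  · intro t m h1 h2
    have ht : 0 ≤ t := le_trans (harr m) h1.1
    set n := t.toNat with hn
    rw [hμ_pos t ht, hμ_succ t ht]
    have hOn1 : OnMarket E m ((n + 1 : ℕ) : ℤ) := by rw [hcast1 t ht]; exact h2
    have hprev : prevFn E (n + 1) = chain E n := rfl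
    unfold ManWeaklyPrefers ManPrefers
    cases h0 : chain E n m with
    | none =>
      cases h0' : chain E (n+1) m with
      | none => exact Or.inl rfl
      | some w' =>
        have hacc := ((chain_spec E (n+1)).2.2.1 m w' h0').1
        obtain ⟨r, hr⟩ := Option.ne_none_iff_exists'.mp hacc
        exact Or.inr ⟨w', rfl, r, hr, Or.inl rfl⟩
    | some w =>
      obtain ⟨r, hr⟩ := Option.ne_none_iff_exists'.mp
        (((chain_spec E n).2.2.1 m w h0).1)
      have hcond : prevFn E (n+1) m = some w ∧
          ∀ m'', prevFn E (n+1) m'' = some w → m'' = m := by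
        rw [hprev]
        exact ⟨h0, fun m'' h'' => (chain_spec E n).2.1 m'' m w h'' h0⟩
      have hw0 : wmod E (prevFn E (n+1)) w m = some 0 := by
        unfold wmod; rw [if_pos hcond]
      have hother : ∀ m', chain E (n+1) m' = some w → m' ≠ m →
          ∃ k, wmod E (prevFn E (n+1)) w m' = some (k+1) := by
        intro m' hm' hne
        have hcnot : ¬ (prevFn E (n+1) m' = some w ∧
            ∀ m'', prevFn E (n+1) m'' = some w → m'' = m') := by
          rintro ⟨hp, -⟩
          rw [hprev] at hp
          exact hne ((chain_spec E n).2.1 m' m w hp h0)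
        have hne2 := ((chain_spec E (n+1)).2.2.1 m' w hm').2
        unfold wmod at hne2 ⊢
        rw [if_neg hcnot] at hne2 ⊢
        obtain ⟨a, ha⟩ := Option.ne_none_iff_exists'.mp
          (show E.wPref w m' ≠ none from fun hx => hne2 (by rw [hx]; rfl))
        exact ⟨a, by rw [ha]; rfl⟩
      cases h0' : chain E (n+1) m with
      | none =>
        exfalso
        apply (chain_spec E (n+1)).2.2.2 m w hOn1
        refine ⟨⟨r, hr, Or.inl h0'⟩, ⟨0, hw0, ?_⟩⟩
        by_cases hex : ∃ m', chain E (n+1) m' = some w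
        · obtain ⟨m', hm'⟩ := hex
          have hne : m' ≠ m := fun he => by
            rw [he, h0'] at hm'; simp at hm'
          obtain ⟨k, hk⟩ := hother m' hm' hne
          exact Or.inr ⟨m', k+1, hm', hk, Nat.succ_pos k⟩
        · push_neg at hex
          exact Or.inl hex
      | some w'' =>
        by_cases hww : w'' = w
        · exact Or.inl (by rw [hww])
        · obtain ⟨r'', hr2⟩ := Option.ne_none_iff_exists'.mp
            (((chain_spec E (n+1)).2.2.1 m w'' h0').1)
          rcases lt_trichotomy r r'' with hlt | heq | hgt
          · exfalso
            apply (chain_spec E (n+1)).2.2.2 m w hOn1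
            refine ⟨⟨r, hr, Or.inr ⟨w'', r'', h0', hr2, hlt⟩⟩, ⟨0, hw0, ?_⟩⟩
            by_cases hex : ∃ m', chain E (n+1) m' = some w
            · obtain ⟨m', hm'⟩ := hex
              have hne : m' ≠ m := fun he => by
                rw [he, h0'] at hm'
                exact hww (Option.some.inj hm')
              obtain ⟨k, hk⟩ := hother m' hm' hne
              exact Or.inr ⟨m', k+1, hm', hk, Nat.succ_pos k⟩
            · push_neg at hex
              exact Or.inl hex
          · exact absurd ((E.mPref_inj m w w'' r hr (heq ▸ hr2)).symm) hww
          · exact Or.inr ⟨w'', rfl, r'', hr2, Or.inr ⟨w, r, rfl, hr, hgt⟩⟩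
  -- no blocking subject to tenure
  · rintro t m w hOn ⟨hm, hw, hex⟩
    have ht : 0 ≤ t := le_trans (harr m) hOn.1
    set n := t.toNat with hn
    rw [hμ_pos t ht] at hm hw hex
    rw [hμ_prev t ht] at hex
    have hOn' : OnMarket E m ((n : ℕ) : ℤ) := by rw [hcast t ht]; exact hOn
    apply (chain_spec E n).2.2.2 m w hOn'
    refine ⟨hm, ?_⟩
    unfold WomanPrefers at hw
    obtain ⟨s, hs, hso⟩ := hw
    rcases hso with hun | ⟨m', r', hm', hr', hlt⟩
    · by_cases hc : prevFn E n m = some w ∧ ∀ m'', prevFn E n m'' = some w → m'' = m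
      · exact ⟨0, by unfold wmod; rw [if_pos hc], Or.inl hun⟩
      · exact ⟨s+1, by unfold wmod; rw [if_neg hc, hs]; rfl, Or.inl hun⟩
    · have hnp : ¬ prevFn E n m' = some w := fun hp => hex ⟨m', hm', hp⟩
      have hwm' : wmod E (prevFn E n) w m' = some (r'+1) := by
        unfold wmod; rw [if_neg (fun hc => hnp hc.1), hr']; rfl
      by_cases hc : prevFn E n m = some w ∧ ∀ m'', prevFn E n m'' = some w → m'' = m
      · exact ⟨0, by unfold wmod; rw [if_pos hc],
          Or.inr ⟨m', r'+1, hm', hwm', Nat.succ_pos r'⟩⟩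
      · exact ⟨s+1, by unfold wmod; rw [if_neg hc, hs]; rfl,
          Or.inr ⟨m', r'+1, hm', hwm', by omega⟩⟩
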